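/- The configuration Σ(1) = {e_1, e_2, e_3 + e_4, e_3 - e_4, e_1 + e_2 - e_3, e_1 - e_2 + e_3, -e_1 + e_2 + e_3} in ℤ⁴ is 2-regular: for every maximal linearly independent subset S of Σ(1), the quotient group ℤ⁴/⟨S⟩ is 2-torsion (every element has order dividing 2), i.e., each such subset spans a sublattice of ℤ⁴ of index 1 or 2. -/

import Mathlib

def Wc : Fin 7 → Fin 4 → ℤ := ![![1,0,0,0], ![0,1,0,0], ![0,0,1,1], ![0,0,1,-1],
      ![1,1,-1,0], ![1,-1,1,0], ![-1,1,1,0]]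

def d4 (M : Fin 4 → Fin 4 → ℤ) : ℤ :=
    M 0 0 * M 1 1 * M 2 2 * M 3 3 - M 0 0 * M 1 1 * M 2 3 * M 3 2 -
    M 0 0 * M 1 2 * M 2 1 * M 3 3 + M 0 0 * M 1 2 * M 2 3 * M 3 1 +
    M 0 0 * M 1 3 * M 2 1 * M 3 2 - M 0 0 * M 1 3 * M 2 2 * M 3 1 -
    M 0 1 * M 1 0 * M 2 2 * M 3 3 + M 0 1 * M 1 0 * M 2 3 * M 3 2 +
    M 0 1 * M 1 2 * M 2 0 * M 3 3 - M 0 1 * M 1 2 * M 2 3 * M 3 0 -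
    M 0 1 * M 1 3 * M 2 0 * M 3 2 + M 0 1 * M 1 3 * M 2 2 * M 3 0 +
    M 0 2 * M 1 0 * M 2 1 * M 3 3 - M 0 2 * M 1 0 * M 2 3 * M 3 1 -
    M 0 2 * M 1 1 * M 2 0 * M 3 3 + M 0 2 * M 1 1 * M 2 3 * M 3 0 +
    M 0 2 * M 1 3 * M 2 0 * M 3 1 - M 0 2 * M 1 3 * M 2 1 * M 3 0 -
    M 0 3 * M 1 0 * M 2 1 * M 3 2 + M 0 3 * M 1 0 * M 2 2 * M 3 1 +
    M 0 3 * M 1 1 * M 2 0 * M 3 2 - M 0 3 * M 1 1 * M 2 2 * M 3 0 -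
    M 0 3 * M 1 2 * M 2 0 * M 3 1 + M 0 3 * M 1 2 * M 2 1 * M 3 0

def adj4 (M : Fin 4 → Fin 4 → ℤ) : Fin 4 → Fin 4 → ℤ :=
  ![ ![ (M 1 1 * M 2 2 * M 3 3 + M 1 2 * M 2 3 * M 3 1 + M 1 3 * M 2 1 * M 3 2 - M 1 3 * M 2 2 * M 3 1 - M 1 1 * M 2 3 * M 3 2 - M 1 2 * M 2 1 * M 3 3),
     (-1) * (M 0 1 * M 2 2 * M 3 3 + M 0 2 * M 2 3 * M 3 1 + M 0 3 * M 2 1 * M 3 2 - M 0 3 * M 2 2 * M 3 1 - M 0 1 * M 2 3 * M 3 2 - M 0 2 * M 2 1 * M 3 3),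
     (M 0 1 * M 1 2 * M 3 3 + M 0 2 * M 1 3 * M 3 1 + M 0 3 * M 1 1 * M 3 2 - M 0 3 * M 1 2 * M 3 1 - M 0 1 * M 1 3 * M 3 2 - M 0 2 * M 1 1 * M 3 3),
     (-1) * (M 0 1 * M 1 2 * M 2 3 + M 0 2 * M 1 3 * M 2 1 + M 0 3 * M 1 1 * M 2 2 - M 0 3 * M 1 2 * M 2 1 - M 0 1 * M 1 3 * M 2 2 - M 0 2 * M 1 1 * M 2 3) ],
  ![ (-1) * (M 1 0 * M 2 2 * M 3 3 + M 1 2 * M 2 3 * M 3 0 + M 1 3 * M 2 0 * M 3 2 - M 1 3 * M 2 2 * M 3 0 - M 1 0 * M 2 3 * M 3 2 - M 1 2 * M 2 0 * M 3 3),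
     (M 0 0 * M 2 2 * M 3 3 + M 0 2 * M 2 3 * M 3 0 + M 0 3 * M 2 0 * M 3 2 - M 0 3 * M 2 2 * M 3 0 - M 0 0 * M 2 3 * M 3 2 - M 0 2 * M 2 0 * M 3 3),
     (-1) * (M 0 0 * M 1 2 * M 3 3 + M 0 2 * M 1 3 * M 3 0 + M 0 3 * M 1 0 * M 3 2 - M 0 3 * M 1 2 * M 3 0 - M 0 0 * M 1 3 * M 3 2 - M 0 2 * M 1 0 * M 3 3),
     (M 0 0 * M 1 2 * M 2 3 + M 0 2 * M 1 3 * M 2 0 + M 0 3 * M 1 0 * M 2 2 - M 0 3 * M 1 2 * M 2 0 - M 0 0 * M 1 3 * M 2 2 - M 0 2 * M 1 0 * M 2 3) ],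
  ![ (M 1 0 * M 2 1 * M 3 3 + M 1 1 * M 2 3 * M 3 0 + M 1 3 * M 2 0 * M 3 1 - M 1 3 * M 2 1 * M 3 0 - M 1 0 * M 2 3 * M 3 1 - M 1 1 * M 2 0 * M 3 3),
     (-1) * (M 0 0 * M 2 1 * M 3 3 + M 0 1 * M 2 3 * M 3 0 + M 0 3 * M 2 0 * M 3 1 - M 0 3 * M 2 1 * M 3 0 - M 0 0 * M 2 3 * M 3 1 - M 0 1 * M 2 0 * M 3 3),
     (M 0 0 * M 1 1 * M 3 3 + M 0 1 * M 1 3 * M 3 0 + M 0 3 * M 1 0 * M 3 1 - M 0 3 * M 1 1 * M 3 0 - M 0 0 * M 1 3 * M 3 1 - M 0 1 * M 1 0 * M 3 3),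
     (-1) * (M 0 0 * M 1 1 * M 2 3 + M 0 1 * M 1 3 * M 2 0 + M 0 3 * M 1 0 * M 2 1 - M 0 3 * M 1 1 * M 2 0 - M 0 0 * M 1 3 * M 2 1 - M 0 1 * M 1 0 * M 2 3) ],
  ![ (-1) * (M 1 0 * M 2 1 * M 3 2 + M 1 1 * M 2 2 * M 3 0 + M 1 2 * M 2 0 * M 3 1 - M 1 2 * M 2 1 * M 3 0 - M 1 0 * M 2 2 * M 3 1 - M 1 1 * M 2 0 * M 3 2),
     (M 0 0 * M 2 1 * M 3 2 + M 0 1 * M 2 2 * M 3 0 + M 0 2 * M 2 0 * M 3 1 - M 0 2 * M 2 1 * M 3 0 - M 0 0 * M 2 2 * M 3 1 - M 0 1 * M 2 0 * M 3 2),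
     (-1) * (M 0 0 * M 1 1 * M 3 2 + M 0 1 * M 1 2 * M 3 0 + M 0 2 * M 1 0 * M 3 1 - M 0 2 * M 1 1 * M 3 0 - M 0 0 * M 1 2 * M 3 1 - M 0 1 * M 1 0 * M 3 2),
     (M 0 0 * M 1 1 * M 2 2 + M 0 1 * M 1 2 * M 2 0 + M 0 2 * M 1 0 * M 2 1 - M 0 2 * M 1 1 * M 2 0 - M 0 0 * M 1 2 * M 2 1 - M 0 1 * M 1 0 * M 2 2) ] ]

/-- `2 * adjugate / det`, entrywise integer division. -/
def n4 (M : Fin 4 → Fin 4 → ℤ) : Fin 4 → Fin 4 → ℤ :=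
  fun i j => (2 * adj4 M i j) / d4 M

lemma det_eq_d4 {R : Type*} [CommRing R] (M : Matrix (Fin 4) (Fin 4) R) : M.det =
    M 0 0 * M 1 1 * M 2 2 * M 3 3 - M 0 0 * M 1 1 * M 2 3 * M 3 2 -
    M 0 0 * M 1 2 * M 2 1 * M 3 3 + M 0 0 * M 1 2 * M 2 3 * M 3 1 +
    M 0 0 * M 1 3 * M 2 1 * M 3 2 - M 0 0 * M 1 3 * M 2 2 * M 3 1 -
    M 0 1 * M 1 0 * M 2 2 * M 3 3 + M 0 1 * M 1 0 * M 2 3 * M 3 2 +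
    M 0 1 * M 1 2 * M 2 0 * M 3 3 - M 0 1 * M 1 2 * M 2 3 * M 3 0 -
    M 0 1 * M 1 3 * M 2 0 * M 3 2 + M 0 1 * M 1 3 * M 2 2 * M 3 0 +
    M 0 2 * M 1 0 * M 2 1 * M 3 3 - M 0 2 * M 1 0 * M 2 3 * M 3 1 -
    M 0 2 * M 1 1 * M 2 0 * M 3 3 + M 0 2 * M 1 1 * M 2 3 * M 3 0 +
    M 0 2 * M 1 3 * M 2 0 * M 3 1 - M 0 2 * M 1 3 * M 2 1 * M 3 0 -
    M 0 3 * M 1 0 * M 2 1 * M 3 2 + M 0 3 * M 1 0 * M 2 2 * M 3 1 +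
    M 0 3 * M 1 1 * M 2 0 * M 3 2 - M 0 3 * M 1 1 * M 2 2 * M 3 0 -
    M 0 3 * M 1 2 * M 2 0 * M 3 1 + M 0 3 * M 1 2 * M 2 1 * M 3 0 := by
  simp [Matrix.det_succ_row_zero, Fin.sum_univ_succ, Fin.succAbove,
    Matrix.det_fin_two,
    show ((2:Fin 3).succ : Fin 4) = 3 from rfl, show Fin.castSucc (2: Fin 3) = 2 from rfl]
  ring

set_option maxHeartbeats 1600000 in
/-- The key finite verification: for each choice of four of the seven vectors,
either the determinant vanishes or `n4` is a one-sided inverse of `M` up to a factor 2. -/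
lemma stmt9_key : ∀ a b c d : Fin 7,
    (fun M : Fin 4 → Fin 4 → ℤ =>
      d4 M = 0 ∨ ∀ i j : Fin 4,
        n4 M i 0 * M 0 j + n4 M i 1 * M 1 j + n4 M i 2 * M 2 j + n4 M i 3 * M 3 j
          = if i = j then 2 else 0)
    (fun k => Wc (![a, b, c, d] k)) := by
  decide

/-- Example 6.4, 2-regularity: every 4-element linearly independent
subset of the configuration spans a sublattice of ℤ⁴ with 2-torsion quotient. -/
theorem stmt9 (V : Fin 7 → Fin 4 → ℤ)
    (hV : V = ![![1,0,0,0], ![0,1,0,0], ![0,0,1,1], ![0,0,1,-1],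
                ![1,1,-1,0], ![1,-1,1,0], ![-1,1,1,0]]) :
    ∀ f : Fin 4 → Fin 7,
      LinearIndependent ℝ (fun k => fun i => (V (f k) i : ℝ)) →
      ∀ x : Fin 4 → ℤ, (2 : ℤ) • x ∈ Submodule.span ℤ (Set.range (V ∘ f)) := by
  intro f hli x
  have hVW : V = Wc := hV
  have hM4 : (fun k i => V (f k) i) = (fun k => Wc (![f 0, f 1, f 2, f 3] k)) := by
    funext k i
    fin_cases k <;> simp [hVW]
  rcases stmt9_key (f 0) (f 1) (f 2) (f 3) with h0 | hN
  · -- determinant zero contradicts linear independence over ℝ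
    exfalso
    have hu : IsUnit (Matrix.of (fun k i => (V (f k) i : ℝ))) := by
      rw [← Matrix.linearIndependent_rows_iff_isUnit]
      exact hli
    have hdu : IsUnit (Matrix.of (fun k i => (V (f k) i : ℝ))).det :=
      (Matrix.isUnit_iff_isUnit_det _).mp hu
    have hcast : (Matrix.of (fun k i => (V (f k) i : ℝ))).det
        = ((d4 (fun k i => V (f k) i) : ℤ) : ℝ) := by
      rw [det_eq_d4]
      simp only [Matrix.of_apply, d4]
      push_cast
      ring
    rw [hM4] at hcast
    rw [hcast, h0] at hdu
    simpa using hdu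
  · -- build the explicit combination
    set M : Fin 4 → Fin 4 → ℤ := (fun k => Wc (![f 0, f 1, f 2, f 3] k)) with hMdef
    rw [Submodule.mem_span_range_iff_exists_fun]
    refine ⟨fun k => x 0 * n4 M 0 k + x 1 * n4 M 1 k + x 2 * n4 M 2 k + x 3 * n4 M 3 k, ?_⟩
    have hcomp : (V ∘ f) = M := by
      funext k
      rw [hMdef]
      funext i
      exact congrFun (congrFun hM4 k) i
    rw [hcomp]
    funext j
    have e0 := hN 0 j
    have e1 := hN 1 j
    have e2 := hN 2 j
    have e3 := hN 3 j
    simp only [Finset.sum_apply, Pi.smul_apply, smul_eq_mul, Fin.sum_univ_four]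
    rcases (by decide : ∀ j : Fin 4, j = 0 ∨ j = 1 ∨ j = 2 ∨ j = 3) j with rfl | rfl | rfl | rfl <;>
      simp at e0 e1 e2 e3 ⊢ <;>
      linear_combination x 0 * e0 + x 1 * e1 + x 2 * e2 + x 3 * e3
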